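/- Let x, y ∈ ℕ^n with x majorized by y, and let p, q ∈ {1,...,n} with p ≤ q. If x↓ − e_p and y↓ − e_q are both nonnegative, then x↓ − e_p is majorized by y↓ − e_q, where e_i is the i-th standard basis vector. -/

import Mathlib

open Finset

/-- Nondecreasing rearrangement of a finite vector. -/
def sortAsc {n : ℕ} {α : Type*} [LinearOrder α] (x : Fin n → α) : Fin n → α :=
  x ∘ Tuple.sort x

/-- Nonincreasing rearrangement of a finite vector. -/
def sortDesc {n : ℕ} {α : Type*} [LinearOrder α] (x : Fin n → α) : Fin n → α :=
  fun i => sortAsc x i.rev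

/-- Sum of the entries of `f` at positions `< k`. -/
def psum {n : ℕ} {α : Type*} [AddCommMonoid α] (f : Fin n → α) (k : ℕ) : α :=
  ∑ i : Fin n, if (i : ℕ) < k then f i else 0

/-- `x` is majorized by `y`: every partial sum of the `k` largest entries of `x`
is at most that of `y`, and the total sums agree. -/
def Maj {n : ℕ} {α : Type*} [AddCommMonoid α] [LinearOrder α] [IsOrderedAddMonoid α] (x y : Fin n → α) : Prop :=
  (∀ k : ℕ, psum (sortDesc x) k ≤ psum (sortDesc y) k) ∧ (∑ i, x i) = ∑ i, y i

/-- Weak submajorization: the sum of the `k` largest entries of `x` is at most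
that of `y`, for every `k`. -/
def WeakSub {n : ℕ} {α : Type*} [AddCommMonoid α] [LinearOrder α] [IsOrderedAddMonoid α] (x y : Fin n → α) : Prop :=
  ∀ k : ℕ, psum (sortDesc x) k ≤ psum (sortDesc y) k

/-- Weak supermajorization: the sum of the `k` smallest entries of `x` is at least
that of `y`, for every `k`. -/
def WeakSuper {n : ℕ} {α : Type*} [AddCommMonoid α] [LinearOrder α] [IsOrderedAddMonoid α] (x y : Fin n → α) : Prop :=
  ∀ k : ℕ, psum (sortAsc y) k ≤ psum (sortAsc x) k

section aux
variable {n : ℕ} {α : Type*} [LinearOrder α]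

lemma sortAsc_comp_perm (f : Fin n → α) (σ : Equiv.Perm (Fin n)) :
    sortAsc (f ∘ σ) = sortAsc f := Tuple.comp_perm_comp_sort_eq_comp_sort

lemma sortDesc_comp_perm (f : Fin n → α) (σ : Equiv.Perm (Fin n)) :
    sortDesc (f ∘ σ) = sortDesc f := by
  funext i; simp only [sortDesc, sortAsc_comp_perm]

lemma antitone_sortDesc (f : Fin n → α) : Antitone (sortDesc f) :=
  fun _ _ hij => Tuple.monotone_sort f (Fin.rev_le_rev.mpr hij)

lemma sortAsc_of_monotone {f : Fin n → α} (hf : Monotone f) : sortAsc f = f := by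
  unfold sortAsc; rw [Tuple.sort_eq_refl_iff_monotone.mpr hf]; rfl

lemma sortDesc_of_antitone {f : Fin n → α} (hf : Antitone f) : sortDesc f = f := by
  have hg : Monotone (f ∘ (Fin.revPerm : Equiv.Perm (Fin n))) := by
    intro i j hij
    exact hf (by simpa using Fin.rev_le_rev.mpr hij)
  have h1 : f = (f ∘ (Fin.revPerm : Equiv.Perm (Fin n))) ∘ (Fin.revPerm : Equiv.Perm (Fin n)) := by
    funext i; simp [Fin.rev_rev]
  funext i
  rw [sortDesc, h1, sortAsc_comp_perm, sortAsc_of_monotone hg]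
  simp [Fin.rev_rev]

lemma sum_sortDesc (f : Fin n → ℕ) : ∑ i, sortDesc f i = ∑ i, f i := by
  have h : ∀ i : Fin n, sortDesc f i = f ((Fin.revPerm.trans (Tuple.sort f)) i) := fun i => rfl
  rw [Finset.sum_congr rfl (fun i _ => h i)]
  exact Equiv.sum_comp _ f

end aux

section psumlemmas
variable {n : ℕ}

lemma psum_single (j : Fin n) (k : ℕ) :
    psum (fun i => if i = j then (1:ℕ) else 0) k = if (j:ℕ) < k then 1 else 0 := by
  unfold psum
  have h : ∀ i : Fin n, (if (i:ℕ) < k then (if i = j then (1:ℕ) else 0) else 0)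
      = if i = j then (if (j:ℕ) < k then 1 else 0) else 0 := by
    intro i; by_cases h : i = j <;> simp [h]
  rw [Finset.sum_congr rfl (fun i _ => h i), Finset.sum_ite_eq']
  simp

lemma psum_add (f g : Fin n → ℕ) (k : ℕ) :
    psum (fun i => f i + g i) k = psum f k + psum g k := by
  unfold psum
  rw [← Finset.sum_add_distrib]
  exact Finset.sum_congr rfl fun i _ => by split <;> simp

lemma psum_sub_single (f : Fin n → ℕ) (j : Fin n) (hj : 1 ≤ f j) (k : ℕ) :
    psum (fun i => f i - if i = j then 1 else 0) k + (if (j:ℕ) < k then 1 else 0) = psum f k := by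
  rw [← psum_single j k, ← psum_add]
  congr 1
  funext i
  by_cases h : i = j
  · subst h; rw [if_pos rfl]; omega
  · simp [h]

lemma psum_succ (f : Fin n → ℕ) {k : ℕ} (hk : k < n) :
    psum f (k+1) = psum f k + f ⟨k, hk⟩ := by
  unfold psum
  have h : ∀ i : Fin n, (if (i:ℕ) < k+1 then f i else 0)
      = (if (i:ℕ) < k then f i else 0) + (if i = ⟨k,hk⟩ then f i else 0) := by
    intro i
    by_cases h2 : (i:ℕ) = k
    · have hik : i = ⟨k, hk⟩ := Fin.ext h2
      simp [hik]
    · have h3 : i ≠ ⟨k,hk⟩ := fun hh => h2 (by rw [hh])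
      have h4 : ((i:ℕ) < k+1) = ((i:ℕ) < k) := by apply propext; omega
      simp [h3, h4]
  rw [Finset.sum_congr rfl (fun i _ => h i), Finset.sum_add_distrib, Finset.sum_ite_eq']
  simp

lemma psum_of_le (f : Fin n → ℕ) {k : ℕ} (hk : n ≤ k) : psum f k = ∑ i, f i :=
  Finset.sum_congr rfl fun i _ => if_pos (lt_of_lt_of_le i.isLt hk)

/-- Key structural lemma: sorting `f - e_p` for antitone `f` moves the decrement
to the last position `p'` carrying the value `f p`. -/
lemma desc_sub_single (f : Fin n → ℕ) (hf : Antitone f) (p : Fin n) (hp : 1 ≤ f p) :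
    ∃ p' : Fin n, p ≤ p' ∧ (∀ i, p ≤ i → i ≤ p' → f i = f p) ∧ (∀ j, p' < j → f j < f p) ∧
      sortDesc (fun i => f i - if i = p then 1 else 0)
        = fun i => f i - if i = p' then 1 else 0 := by
  classical
  set S : Finset (Fin n) := Finset.univ.filter (fun j => f j = f p) with hS
  have hpS : p ∈ S := by simp [hS]
  set p' : Fin n := S.max' ⟨p, hpS⟩ with hp'def
  have hp'S : p' ∈ S := S.max'_mem _
  have hfp' : f p' = f p := by simpa [hS] using hp'S
  have hpp' : p ≤ p' := S.le_max' p hpS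
  have hconst : ∀ i, p ≤ i → i ≤ p' → f i = f p := by
    intro i h1 h2
    have ha := hf h1
    have hb := hf h2
    omega
  have hlast : ∀ j, p' < j → f j < f p := by
    intro j hj
    have h1 : f j ≤ f p := hf (hpp'.trans hj.le)
    have h2 : f j ≠ f p := by
      intro hh
      have hjS : j ∈ S := by simp [hS, hh]
      exact absurd (S.le_max' j hjS) (not_le.mpr hj)
    omega
  refine ⟨p', hpp', hconst, hlast, ?_⟩
  set g : Fin n → ℕ := fun i => f i - if i = p' then 1 else 0 with hg
  have hganti : Antitone g := by
    intro i j hij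
    have hfij := hf hij
    simp only [hg]
    by_cases h2 : i = p'
    · have hfi : f i = f p' := by rw [h2]
      by_cases h1 : j = p'
      · have hfj : f j = f p' := by rw [h1]
        rw [if_pos h1, if_pos h2]; omega
      · have hj' : p' < j := lt_of_le_of_ne (h2 ▸ hij) (Ne.symm h1)
        have hv := hlast j hj'
        rw [if_pos h2, if_neg h1]; omega
    · by_cases h1 : j = p'
      · have hfj : f j = f p' := by rw [h1]
        rw [if_pos h1, if_neg h2]; omega
      · rw [if_neg h1, if_neg h2]; omega
  have hcomp : (fun i => f i - if i = p then 1 else 0) = g ∘ (Equiv.swap p p') := by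
    funext i
    simp only [Function.comp, hg]
    by_cases hip : i = p
    · subst hip
      rw [Equiv.swap_apply_left, if_pos rfl, if_pos rfl, hfp']
    · by_cases hip' : i = p'
      · have hp'p : p' ≠ p := fun hh => hip (hip'.trans hh)
        rw [hip', Equiv.swap_apply_right, if_neg hp'p, if_neg (Ne.symm hp'p), hfp']
      · rw [Equiv.swap_apply_of_ne_of_ne hip hip', if_neg hip, if_neg hip']
  rw [hcomp, sortDesc_comp_perm, sortDesc_of_antitone hganti]

end psumlemmas

theorem stmt_6 {n : ℕ} (x y : Fin n → ℕ) (h : Maj x y) (p q : Fin n) (hpq : p ≤ q)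
    (hx : 1 ≤ sortDesc x p) (hy : 1 ≤ sortDesc y q) :
    Maj (fun i => sortDesc x i - if i = p then 1 else 0)
        (fun i => sortDesc y i - if i = q then 1 else 0) := by
  obtain ⟨hmaj, hsum⟩ := h
  have hfx : Antitone (sortDesc x) := antitone_sortDesc x
  have hfy : Antitone (sortDesc y) := antitone_sortDesc y
  set fx := sortDesc x with hfxdef
  set fy := sortDesc y with hfydef
  obtain ⟨p', hpp', hxconst, hxlast, hxs⟩ := desc_sub_single fx hfx p hx
  obtain ⟨q', hqq', hyconst, hylast, hys⟩ := desc_sub_single fy hfy q hy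
  constructor
  · intro k
    rw [hxs, hys]
    have Hx := psum_sub_single fx p' (by rw [hxconst p' hpp' le_rfl]; exact hx) k
    have Hy := psum_sub_single fy q' (by rw [hyconst q' hqq' le_rfl]; exact hy) k
    have hmk := hmaj k
    by_cases hbq : (q':ℕ) < k
    · by_cases hbp : (p':ℕ) < k
      · rw [if_pos hbp] at Hx; rw [if_pos hbq] at Hy; omega
      · -- q' < k ≤ p' : show strict inequality psum fx k < psum fy k
        push_neg at hbp
        have hkn : k < n := lt_of_le_of_lt hbp p'.isLt
        have hpqv : (p:ℕ) ≤ (q:ℕ) := hpq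
        have hqq'v : (q:ℕ) ≤ (q':ℕ) := hqq'
        have hpk : (p:ℕ) < k := by omega
        have hqk : (q:ℕ) < k := by omega
        have hvK : fx ⟨k, hkn⟩ = fx p :=
          hxconst _ (Fin.le_def.mpr hpk.le) (Fin.le_def.mpr hbp)
        have hyKq : fy ⟨k, hkn⟩ < fy q := hylast _ (Fin.lt_def.mpr hbq)
        have hne : psum fx k < psum fy k := by
          rcases lt_or_eq_of_le hmk with hlt | E
          · exact hlt
          · exfalso
            -- Step A : fx k ≤ fy k
            have hA : fx ⟨k, hkn⟩ ≤ fy ⟨k, hkn⟩ := by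
              have h5 := hmaj (k+1)
              rw [psum_succ fx hkn, psum_succ fy hkn] at h5
              omega
            -- Step B : downward induction from k to q+1
            have down : ∀ m, m ≤ k - ((q:ℕ)+1) → psum fy (k - m) ≤ psum fx (k - m) := by
              intro m
              induction m with
              | zero => intro _; simpa using E.ge
              | succ m ih =>
                intro hm
                have hrec := ih (by omega)
                have hj1 : (k - (m+1)) + 1 = k - m := by omega
                have hqj : (q:ℕ) < k - (m+1) := by omega
                have hjk : k - (m+1) < k := by omega
                have hjn : k - (m+1) < n := hjk.trans hkn
                rw [← hj1, psum_succ fx hjn, psum_succ fy hjn] at hrec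
                have hx1 : fx ⟨k - (m+1), hjn⟩ = fx p :=
                  hxconst _ (Fin.le_def.mpr (le_trans hpqv hqj.le))
                    (Fin.le_def.mpr (le_trans hjk.le hbp))
                have hy1 : fy ⟨k, hkn⟩ ≤ fy ⟨k - (m+1), hjn⟩ := hfy (Fin.le_def.mpr hjk.le)
                omega
            have E2 : psum fy ((q:ℕ)+1) ≤ psum fx ((q:ℕ)+1) := by
              have h6 := down (k - ((q:ℕ)+1)) le_rfl
              have hkq : k - (k - ((q:ℕ)+1)) = (q:ℕ)+1 := by omega
              rwa [hkq] at h6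
            have hmq1 := hmaj ((q:ℕ)+1)
            have hmq := hmaj (q:ℕ)
            have hqn : (q:ℕ) < n := q.isLt
            rw [psum_succ fx hqn, psum_succ fy hqn] at E2 hmq1
            have hqeta : (⟨(q:ℕ), hqn⟩ : Fin n) = q := Fin.eta q hqn
            rw [hqeta] at E2 hmq1
            -- fy q ≤ fx q = fx p = fx k ≤ fy k < fy q
            have hfxq : fx q = fx p := hxconst q hpq (Fin.le_def.mpr (le_trans hqk.le hbp))
            omega
        rw [if_neg (not_lt.mpr hbp)] at Hx
        rw [if_pos hbq] at Hy
        omega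
    · rw [if_neg hbq] at Hy
      have : psum (fun i => fx i - if i = p' then 1 else 0) k ≤ psum fx k := by omega
      omega
  · have Hx := psum_sub_single fx p hx n
    have Hy := psum_sub_single fy q hy n
    rw [if_pos p.isLt, psum_of_le _ le_rfl, psum_of_le _ le_rfl] at Hx
    rw [if_pos q.isLt, psum_of_le _ le_rfl, psum_of_le _ le_rfl] at Hy
    have Hx' : (∑ i, (fx i - if i = p then 1 else 0)) + 1 = ∑ i, fx i := Hx
    have Hy' : (∑ i, (fy i - if i = q then 1 else 0)) + 1 = ∑ i, fy i := Hy
    have hsx : ∑ i, fx i = ∑ i, x i := sum_sortDesc x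
    have hsy : ∑ i, fy i = ∑ i, y i := sum_sortDesc y
    show (∑ i, (fx i - if i = p then 1 else 0)) = ∑ i, (fy i - if i = q then 1 else 0)
    omega
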